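/- Let T be a positive linear contraction on complex Lᵖ(X), 1 ≤ p < ∞ (positive on the real subspace, commuting with complex conjugation). If f ∈ Lᵖ_ℂ(X) satisfies ‖T f‖ = ‖f‖ and ‖T(|f|)‖ ≤ ‖|f|‖, then T(|f|) = |T f| almost everywhere. -/

import Mathlib

open MeasureTheory Filter Complex

lemma unit_bound {z : ℂ} {c : ℝ}
    (h : ∀ q : ℚ, (Complex.exp (q * Complex.I) * z).re ≤ c) :
    ‖z‖ ≤ c := by
  have hall : ∀ r : ℝ, (Complex.exp (r * Complex.I) * z).re ≤ c := by
    intro r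
    have hcont : Continuous fun r : ℝ => (Complex.exp (r * Complex.I) * z).re := by
      fun_prop
    have hS : IsClosed {r : ℝ | (Complex.exp (r * Complex.I) * z).re ≤ c} :=
      isClosed_le hcont continuous_const
    have hsub : Set.range ((↑) : ℚ → ℝ) ⊆ {r : ℝ | (Complex.exp (r * Complex.I) * z).re ≤ c} := by
      rintro _ ⟨q, rfl⟩; exact h q
    have := hS.closure_subset_iff.mpr hsub
    have hr : r ∈ closure (Set.range ((↑) : ℚ → ℝ)) := by
      rw [Rat.denseRange_cast.closure_eq]; trivial
    exact this hr
  have key := hall (-(Complex.arg z))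
  have hz : Complex.exp ((↑(-(Complex.arg z)) : ℂ) * Complex.I) * z = (‖z‖ : ℂ) := by
    push_cast
    nth_rewrite 2 [← Complex.norm_mul_exp_arg_mul_I z]
    rw [← mul_assoc, mul_comm (Complex.exp _), mul_assoc, ← Complex.exp_add]
    have h0 : (-(z.arg : ℂ) * Complex.I + (z.arg : ℂ) * Complex.I) = 0 := by ring
    rw [h0, Complex.exp_zero, mul_one]
  rw [hz] at key
  simpa using key

theorem T_abs_eq_abs_T
    {X : Type*} [MeasurableSpace X] (μ : Measure X) [SigmaFinite μ]
    (p : ENNReal) [Fact (1 ≤ p)] (hp : p ≠ ⊤)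
    (T : Lp ℂ p μ →L[ℂ] Lp ℂ p μ)
    (hcontr : ∀ g : Lp ℂ p μ, ‖T g‖ ≤ ‖g‖)
    (hpos : ∀ g : Lp ℂ p μ, (∀ᵐ x ∂μ, (g x).im = 0 ∧ 0 ≤ (g x).re) →
      ∀ᵐ x ∂μ, ((T g) x).im = 0 ∧ 0 ≤ ((T g) x).re)
    (hconj : ∀ g gc : Lp ℂ p μ, (⇑gc =ᵐ[μ] fun x => starRingEnd ℂ (g x)) →
      ⇑(T gc) =ᵐ[μ] fun x => starRingEnd ℂ ((T g) x))
    (f af : Lp ℂ p μ)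
    (haf : ⇑af =ᵐ[μ] fun x => (‖f x‖ : ℂ))
    (hf : ‖T f‖ = ‖f‖) (hTaf : ‖T af‖ ≤ ‖af‖) :
    ⇑(T af) =ᵐ[μ] fun x => (‖(T f) x‖ : ℂ) := by
  have hp0 : p ≠ 0 := (lt_of_lt_of_le zero_lt_one Fact.out).ne'
  have hafpos : ∀ᵐ x ∂μ, (af x).im = 0 ∧ 0 ≤ (af x).re := by
    filter_upwards [haf] with x hx
    simp [hx, norm_nonneg]
  have hTafpos : ∀ᵐ x ∂μ, ((T af) x).im = 0 ∧ 0 ≤ ((T af) x).re := hpos af hafpos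
  -- Step 1: |T f| ≤ (T af).re a.e.
  have key : ∀ᵐ x ∂μ, ‖(T f) x‖ ≤ ((T af) x).re := by
    have hq : ∀ q : ℚ, ∀ᵐ x ∂μ,
        (Complex.exp (q * Complex.I) * ((T f) x)).re ≤ ((T af) x).re := by
      intro q
      set c : ℂ := Complex.exp (q * Complex.I) with hc
      have habsc : ‖c‖ = 1 := by
        rw [hc]; simpa using Complex.norm_exp_ofReal_mul_I (q : ℝ)
      set g : Lp ℂ p μ := c • f with hg
      set gc : Lp ℂ p μ := (RCLike.conjCLE.toContinuousLinearMap : ℂ →L[ℝ] ℂ).compLp g with hgc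
      have hgc_ae : ⇑gc =ᵐ[μ] fun x => starRingEnd ℂ (g x) := by
        filter_upwards [ContinuousLinearMap.coeFn_compLp
          (RCLike.conjCLE.toContinuousLinearMap : ℂ →L[ℝ] ℂ) g] with x hx
        rw [hx]
        simp [RCLike.conjCLE_apply]
      set r : Lp ℂ p μ := (2⁻¹ : ℂ) • (g + gc) with hr
      have hr_ae : ⇑r =ᵐ[μ] fun x => ((c * (f x)).re : ℂ) := by
        filter_upwards [Lp.coeFn_smul (2⁻¹ : ℂ) (g + gc), Lp.coeFn_add g gc, hgc_ae,
          Lp.coeFn_smul c f] with x h1 h2 h3 h4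
        show (r : Lp ℂ p μ) x = _
        rw [hr, h1]
        simp only [Pi.smul_apply, h2, Pi.add_apply, h3]
        have h4' : (g : X → ℂ) x = c * f x := by rw [hg, h4]; simp
        rw [h4', Complex.add_conj]
        simp [smul_eq_mul]
      have hTr_ae : ⇑(T r) =ᵐ[μ] fun x => ((c * ((T f) x)).re : ℂ) := by
        have hTgc : ⇑(T gc) =ᵐ[μ] fun x => starRingEnd ℂ ((T g) x) := hconj g gc hgc_ae
        have hTg : ⇑(T g) =ᵐ[μ] fun x => c * ((T f) x) := by
          rw [hg, T.map_smul]
          filter_upwards [Lp.coeFn_smul c (T f)] with x hx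
          rw [hx]; simp
        have hTr : T r = (2⁻¹ : ℂ) • (T g + T gc) := by
          rw [hr, T.map_smul, T.map_add]
        rw [hTr]
        filter_upwards [Lp.coeFn_smul (2⁻¹ : ℂ) (T g + T gc), Lp.coeFn_add (T g) (T gc),
          hTgc, hTg] with x h1 h2 h3 h4
        rw [h1]
        simp only [Pi.smul_apply, h2, Pi.add_apply, h3, h4, Complex.add_conj]
        simp [smul_eq_mul]
      have hsub_pos : ∀ᵐ x ∂μ, ((af - r) x).im = 0 ∧ 0 ≤ ((af - r) x).re := by
        filter_upwards [Lp.coeFn_sub af r, haf, hr_ae] with x h1 h2 h3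
        rw [h1]
        simp only [Pi.sub_apply, h2, h3]
        refine ⟨by simp, ?_⟩
        have hle : (c * f x).re ≤ ‖f x‖ := by
          calc (c * f x).re ≤ ‖c * f x‖ := Complex.re_le_norm _
            _ = ‖f x‖ := by rw [norm_mul, habsc, one_mul]
        simpa using hle
      have hP := hpos (af - r) hsub_pos
      rw [map_sub] at hP
      filter_upwards [hP, Lp.coeFn_sub (T af) (T r), hTr_ae] with x h1 h2 h3
      rw [h2] at h1
      have h1' := h1.2
      simp only [Pi.sub_apply, Complex.sub_re, h3, Complex.ofReal_re] at h1'
      linarith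
    filter_upwards [ae_all_iff.mpr hq] with x hx
    exact unit_bound hx
  -- Step 2: norm comparison
  have hnorm_af : ‖af‖ = ‖f‖ := by
    rw [Lp.norm_def, Lp.norm_def, eLpNorm_congr_norm_ae (g := ⇑f)]
    filter_upwards [haf] with x hx
    simp [hx]
  have hTaf_le : ‖T af‖ ≤ ‖T f‖ := hTaf.trans_eq (hnorm_af.trans hf.symm)
  have heLp : eLpNorm (⇑(T af)) p μ ≤ eLpNorm (⇑(T f)) p μ := by
    rw [Lp.norm_def, Lp.norm_def] at hTaf_le
    exact (ENNReal.toReal_le_toReal (Lp.eLpNorm_ne_top _) (Lp.eLpNorm_ne_top _)).mp hTaf_le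
  have hpr : 0 < p.toReal := ENNReal.toReal_pos hp0 hp
  have hlint : ∫⁻ x, (‖(T af) x‖₊ : ENNReal) ^ p.toReal ∂μ
      ≤ ∫⁻ x, (‖(T f) x‖₊ : ENNReal) ^ p.toReal ∂μ := by
    rw [eLpNorm_eq_lintegral_rpow_enorm_toReal hp0 hp, eLpNorm_eq_lintegral_rpow_enorm_toReal hp0 hp] at heLp
    have h2 := ENNReal.rpow_le_rpow heLp hpr.le
    rwa [← ENNReal.rpow_mul, ← ENNReal.rpow_mul, one_div,
      inv_mul_cancel₀ hpr.ne', ENNReal.rpow_one, ENNReal.rpow_one] at h2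
  -- a.e. pointwise ≤ of the integrands
  have hfg : (fun x => (‖(T f) x‖₊ : ENNReal) ^ p.toReal)
      ≤ᵐ[μ] fun x => (‖(T af) x‖₊ : ENNReal) ^ p.toReal := by
    filter_upwards [key, hTafpos] with x hx ⟨him, hre⟩
    have habs : ‖(T af) x‖ = ((T af) x).re := by
      have : (T af) x = (((T af) x).re : ℂ) := Complex.ext rfl (by simp [him])
      rw [this]
      simp [_root_.abs_of_nonneg hre]
    have hnorm : ‖(T f) x‖ ≤ ‖(T af) x‖ := by
      rw [habs]
      exact hx
    exact ENNReal.rpow_le_rpow (by exact_mod_cast hnorm) hpr.le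
  have hfin : ∫⁻ x, (‖(T f) x‖₊ : ENNReal) ^ p.toReal ∂μ ≠ ⊤ :=
    (lintegral_rpow_enorm_lt_top_of_eLpNorm_lt_top hp0 hp (Lp.eLpNorm_lt_top _)).ne
  have hmeas : AEMeasurable (fun x => (‖(T af) x‖₊ : ENNReal) ^ p.toReal) μ :=
    (Lp.aestronglyMeasurable (T af)).enorm.pow_const _
  have heq := ae_eq_of_ae_le_of_lintegral_le hfg hfin hmeas hlint
  -- conclude
  filter_upwards [heq, hTafpos, key] with x hx ⟨him, hre⟩ _
  have hnn : (‖(T f) x‖₊ : ENNReal) = (‖(T af) x‖₊ : ENNReal) :=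
    ENNReal.rpow_left_injective hpr.ne' hx
  have habs : ‖(T f) x‖ = ‖(T af) x‖ := by
    have := congrArg ENNReal.toReal hnn
    simpa [coe_nnnorm] using this
  have hreal : (T af) x = (((T af) x).re : ℂ) := Complex.ext rfl (by simp [him])
  rw [habs, hreal]
  simp [_root_.abs_of_nonneg hre]
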